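/- Let V be a finite commutative unital quantale (the underlying lattice is a finite set), (X,a) a finite symmetric V-category, and A a propositional algebra of maps X → V each of whose elements is a V-functor (X,a) → V_s, and suppose A is initial: a x y = ⨅_{ψ∈A} hom_s (ψ x) (ψ y) for all x,y. Then every V-functor f : (X,a) → V_s belongs to A. -/

import Mathlib

/-- Symmetrized hom: `hom_s(u,v) = hom(u,v) ⊓ hom(v,u)`. -/
def homs {V : Type*} [Lattice V] (hom : V → V → V) (u v : V) : V :=
  hom u v ⊓ hom v u

private lemma biInf_mem {V X ι : Type*} [CompleteLattice V] (A : Set (X → V))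
    (hA_top : (fun _ : X => (⊤ : V)) ∈ A)
    (hA_inf : ∀ f ∈ A, ∀ g ∈ A, (fun x => f x ⊓ g x) ∈ A)
    (s : Finset ι) (F : ι → X → V) (hF : ∀ i ∈ s, F i ∈ A) :
    (fun z => ⨅ i ∈ s, F i z) ∈ A := by
  classical
  induction s using Finset.induction_on with
  | empty => simpa using hA_top
  | insert b t hnotmem IH =>
    have h1 : F b ∈ A := hF b (Finset.mem_insert_self _ _)
    have h2 := IH (fun i hi => hF i (Finset.mem_insert_of_mem hi))
    have h3 : (fun z => ⨅ i ∈ insert b t, F i z) = fun z => F b z ⊓ ⨅ i ∈ t, F i z :=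
      funext fun z => Finset.iInf_insert b t (fun i => F i z)
    rw [h3]
    exact hA_inf (F b) h1 _ h2

private lemma biSup_mem {V X ι : Type*} [CompleteLattice V] (A : Set (X → V))
    (hA_sup : ∀ f ∈ A, ∀ g ∈ A, (fun x => f x ⊔ g x) ∈ A)
    (s : Finset ι) (hs : s.Nonempty) (F : ι → X → V) (hF : ∀ i ∈ s, F i ∈ A) :
    (fun z => ⨆ i ∈ s, F i z) ∈ A := by
  classical
  induction hs using Finset.Nonempty.cons_induction with
  | singleton b => simpa using hF b (Finset.mem_singleton_self b)
  | cons b t hb ht IH =>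
    have h1 : F b ∈ A := hF b (Finset.mem_cons_self _ _)
    have h2 := IH (fun i hi => hF i (Finset.mem_cons_of_mem hi))
    have h3 : (fun z => ⨆ i ∈ Finset.cons b t hb, F i z) = fun z => F b z ⊔ ⨆ i ∈ t, F i z := by
      funext z
      rw [Finset.cons_eq_insert, Finset.iSup_insert]
    rw [h3]
    exact hA_sup (F b) h1 _ h2

theorem sw_finite_quantale
    {V : Type*} [CompleteLattice V] [Finite V]
    (ten : V → V → V) (k : V) (hom : V → V → V)
    (ten_comm : ∀ u v : V, ten u v = ten v u)
    (ten_assoc : ∀ u v w : V, ten (ten u v) w = ten u (ten v w))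
    (ten_unit : ∀ u : V, ten k u = u)
    (ten_sup : ∀ (u : V) (S : Set V), ten u (sSup S) = ⨆ v ∈ S, ten u v)
    (hom_adj : ∀ u v w : V, ten u v ≤ w ↔ v ≤ hom u w)
    {X : Type*} [Finite X] (a : X → X → V)
    (ha_refl : ∀ x, k ≤ a x x)
    (ha_trans : ∀ x y z, ten (a x y) (a y z) ≤ a x z)
    (ha_symm : ∀ x y, a x y = a y x)
    (A : Set (X → V))
    (hA_top : (fun _ : X => (⊤ : V)) ∈ A)
    (hA_inf : ∀ f ∈ A, ∀ g ∈ A, (fun x => f x ⊓ g x) ∈ A)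
    (hA_sup : ∀ f ∈ A, ∀ g ∈ A, (fun x => f x ⊔ g x) ∈ A)
    (hA_ten : ∀ u : V, ∀ f ∈ A, (fun x => ten u (f x)) ∈ A)
    (hA_homs : ∀ u : V, ∀ f ∈ A, (fun x => homs hom u (f x)) ∈ A)
    (hA_fun : ∀ ψ ∈ A, ∀ x y, a x y ≤ homs hom (ψ x) (ψ y))
    (hinit : ∀ x y, a x y = ⨅ ψ ∈ A, homs hom (ψ x) (ψ y))
    (f : X → V) (hf : ∀ x y, a x y ≤ homs hom (f x) (f y)) :
    f ∈ A := by
  classical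
  have _inst : Fintype X := Fintype.ofFinite X
  have ten_mono : ∀ u v w : V, v ≤ w → ten u v ≤ ten u w := by
    intro u v w h
    exact (hom_adj u v (ten u w)).mpr (le_trans h ((hom_adj u w (ten u w)).mp le_rfl))
  -- a x · ∈ A
  have hAfin : A.Finite := Set.toFinite A
  have haA : ∀ x, (fun z => a x z) ∈ A := by
    intro x
    have heq : (fun z => a x z) = fun z => ⨅ ψ ∈ hAfin.toFinset, homs hom (ψ x) (ψ z) := by
      funext z
      rw [hinit x z]
      exact le_antisymm (le_iInf₂ fun ψ hψ => iInf₂_le ψ (hAfin.mem_toFinset.mp hψ))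
        (le_iInf₂ fun ψ hψ => iInf₂_le ψ (hAfin.mem_toFinset.mpr hψ))
    rw [heq]
    exact biInf_mem A hA_top hA_inf hAfin.toFinset _
      (fun ψ hψ => hA_homs (ψ x) ψ (hAfin.mem_toFinset.mp hψ))
  rcases isEmpty_or_nonempty X with hX | hX
  · have : f = fun _ : X => (⊤ : V) := funext fun z => hX.elim z
    rw [this]; exact hA_top
  · have key : f = fun z => ⨆ x ∈ (Finset.univ : Finset X), ten (f x) (a x z) := by
      funext z
      refine le_antisymm ?_ ?_
      · have h1 : f z ≤ ten (f z) (a z z) := by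
          calc f z = ten (f z) k := by rw [ten_comm, ten_unit]
          _ ≤ ten (f z) (a z z) := ten_mono _ _ _ (ha_refl z)
        exact le_trans h1 (le_iSup₂ (f := fun x _ => ten (f x) (a x z)) z (Finset.mem_univ z))
      · refine iSup₂_le fun x _ => ?_
        have := le_trans (hf x z) inf_le_left
        exact (hom_adj (f x) (a x z) (f z)).mpr this
    rw [key]
    exact biSup_mem A hA_sup Finset.univ Finset.univ_nonempty _
      (fun x _ => hA_ten (f x) _ (haA x))
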